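/- Let λ > 0 and μ > 0. There exists δ > 0 such that every solution y : [0,∞) → ℝ × ℝ of the time-reversed constant-mobility system y'(t) = −F(y(t)), where F(z,m) = ((μ/2)·z·|z| + λ·z + 2·m, −μ·m·|z| − μ·z), with ‖y(0)‖ < δ converges to the origin: y(t) → (0,0) as t → ∞; i.e., the origin is locally asymptotically stable for the time-reversed system. -/

import Mathlib

private noncomputable def Vq (lam mu : ℝ) (p : ℝ × ℝ) : ℝ :=
  mu * p.1 ^ 2 + lam * (p.1 * p.2) + (2 + lam ^ 2 / (2 * mu)) * p.2 ^ 2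

private noncomputable def Vd (lam mu : ℝ) (p : ℝ × ℝ) : ℝ :=
  mu * (2 * p.1 * (-((mu / 2) * p.1 * |p.1| + lam * p.1 + 2 * p.2)))
    + lam * ((-((mu / 2) * p.1 * |p.1| + lam * p.1 + 2 * p.2)) * p.2
        + p.1 * (mu * p.2 * |p.1| + mu * p.1))
    + (2 + lam ^ 2 / (2 * mu)) * (2 * p.2 * (mu * p.2 * |p.1| + mu * p.1))

private lemma Vq_le (lam mu : ℝ) (hlam : 0 < lam) (hmu : 0 < mu) (p : ℝ × ℝ) :
    Vq lam mu p ≤ (mu + lam + 2 + lam ^ 2 / (2 * mu)) * (p.1 ^ 2 + p.2 ^ 2) := by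
  have h : 0 < lam ^ 2 / (2 * mu) := by positivity
  unfold Vq
  nlinarith [sq_nonneg (p.1 - p.2), sq_nonneg (p.1 + p.2), sq_nonneg p.1, sq_nonneg p.2]

private lemma le_Vq (lam mu : ℝ) (hlam : 0 < lam) (hmu : 0 < mu) (p : ℝ × ℝ) :
    min (mu / 2) 2 * (p.1 ^ 2 + p.2 ^ 2) ≤ Vq lam mu p := by
  have h1 : min (mu / 2) 2 ≤ mu / 2 := min_le_left _ _
  have h2 : min (mu / 2) 2 ≤ (2:ℝ) := min_le_right _ _
  have key : (mu / 2) * p.1 ^ 2 + lam * (p.1 * p.2) + (lam ^ 2 / (2 * mu)) * p.2 ^ 2 ≥ 0 := by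
    have h3 : 0 ≤ (mu * p.1 + lam * p.2) ^ 2 := sq_nonneg _
    have h4 : (mu / 2) * p.1 ^ 2 + lam * (p.1 * p.2) + (lam ^ 2 / (2 * mu)) * p.2 ^ 2
        = (mu * p.1 + lam * p.2) ^ 2 / (2 * mu) := by field_simp; ring
    rw [h4]; positivity
  unfold Vq
  nlinarith [sq_nonneg p.1, sq_nonneg p.2]

private lemma Vd_key (lam mu : ℝ) (hlam : 0 < lam) (hmu : 0 < mu) (p : ℝ × ℝ)
    (hz : |p.1| ≤ (lam * min mu 2) / (2 * (lam * mu / 4 + 4 * mu + lam ^ 2))) :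
    Vd lam mu p ≤ -((lam * min mu 2) / 2) * (p.1 ^ 2 + p.2 ^ 2) := by
  set κ := lam * min mu 2 with hκdef
  set M := lam * mu / 4 + 4 * mu + lam ^ 2 with hMdef
  have hM : 0 < M := by have := min_le_left mu 2; positivity
  have hκ : 0 < κ := by
    have : 0 < min mu 2 := lt_min hmu two_pos
    positivity
  have hκ1 : κ ≤ lam * mu := by
    have := min_le_left mu 2
    nlinarith
  have hκ2 : κ ≤ 2 * lam := by
    have := min_le_right mu 2
    nlinarith
  set A := |p.1| with hA
  have hA0 : 0 ≤ A := abs_nonneg _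
  have hA2 : A * A = p.1 ^ 2 := by rw [hA, abs_mul_abs_self]; ring
  have hMε : M * ((lam * min mu 2) / (2 * M)) = κ / 2 := by
    rw [hκdef] at *
    field_simp
  have hVdeq : Vd lam mu p = -(lam * mu) * p.1 ^ 2 - 2 * lam * p.2 ^ 2
      - mu ^ 2 * p.1 ^ 2 * A + (lam * mu / 2) * (p.1 * p.2) * A
      + (4 * mu + lam ^ 2) * p.2 ^ 2 * A := by
    unfold Vd
    rw [← hA]
    field_simp
    ring
  have h1 : Vd lam mu p ≤ -κ * (p.1 ^ 2 + p.2 ^ 2) + M * A * (p.1 ^ 2 + p.2 ^ 2) := by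
    rw [hVdeq, hMdef]
    nlinarith [mul_nonneg hA0 (sq_nonneg (p.1 - p.2)), mul_nonneg hA0 (sq_nonneg (p.1 + p.2)),
      mul_nonneg hA0 (sq_nonneg p.1), mul_nonneg hA0 (sq_nonneg p.2), sq_nonneg p.1, sq_nonneg p.2]
  have h2 : M * A * (p.1 ^ 2 + p.2 ^ 2) ≤ (κ / 2) * (p.1 ^ 2 + p.2 ^ 2) := by
    have hS : 0 ≤ p.1 ^ 2 + p.2 ^ 2 := by positivity
    have : M * A ≤ κ / 2 := by
      calc M * A ≤ M * (κ / (2 * M)) := by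
            apply mul_le_mul_of_nonneg_left _ hM.le
            exact hz
        _ = κ / 2 := hMε
    exact mul_le_mul_of_nonneg_right this hS
  calc Vd lam mu p ≤ -κ * (p.1 ^ 2 + p.2 ^ 2) + M * A * (p.1 ^ 2 + p.2 ^ 2) := h1
    _ ≤ -κ * (p.1 ^ 2 + p.2 ^ 2) + (κ / 2) * (p.1 ^ 2 + p.2 ^ 2) := by linarith
    _ = -(κ / 2) * (p.1 ^ 2 + p.2 ^ 2) := by ring

private lemma abs_le_of_sq_le (x e : ℝ) (he : 0 ≤ e) (h : x ^ 2 ≤ e ^ 2) : |x| ≤ e := by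
  rw [← Real.sqrt_sq_eq_abs, ← Real.sqrt_sq he]
  exact Real.sqrt_le_sqrt h

open Set Filter Real

set_option maxHeartbeats 2000000 in
/-- The origin is locally asymptotically stable for the time reversal `y' = −F(y)` of
the constant-mobility system: there is `δ > 0` such that every solution on `[0,∞)`
starting with `‖y(0)‖ < δ` converges to the origin. -/
theorem constant_mobility_reversed_origin_asymptotically_stable
    (lam mu : ℝ) (hlam : 0 < lam) (hmu : 0 < mu) :
    let F : ℝ × ℝ → ℝ × ℝ := fun p =>
      ((mu / 2) * p.1 * |p.1| + lam * p.1 + 2 * p.2, -(mu * p.2 * |p.1|) - mu * p.1)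
    ∃ δ : ℝ, 0 < δ ∧
      ∀ y : ℝ → ℝ × ℝ,
        (∀ t ∈ Set.Ici (0 : ℝ), HasDerivWithinAt y (-(F (y t))) (Set.Ici 0) t) →
        ‖y 0‖ < δ →
        Filter.Tendsto y Filter.atTop (nhds ((0 : ℝ), (0 : ℝ))) := by
  intro F
  have hb : (0:ℝ) < 2 + lam ^ 2 / (2 * mu) := by positivity
  set κ := lam * min mu 2 with hκdef
  set M := lam * mu / 4 + 4 * mu + lam ^ 2 with hMdef
  set β := mu + lam + 2 + lam ^ 2 / (2 * mu) with hβdef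
  set α := min (mu / 2) 2 with hαdef
  have hκ : 0 < κ := by
    have : (0:ℝ) < min mu 2 := lt_min hmu two_pos
    positivity
  have hM : 0 < M := by positivity
  have hβ : 0 < β := by positivity
  have hα : 0 < α := lt_min (by positivity) two_pos
  set ε := κ / (2 * M) with hεdef
  have hε : 0 < ε := by positivity
  set k := κ / (2 * β) with hkdef
  have hk : 0 < k := by positivity
  set c₀ := α * ε ^ 2 with hc₀def
  have hc₀pos : 0 < c₀ := by positivity
  refine ⟨Real.sqrt (c₀ / (2 * β)), Real.sqrt_pos.mpr (by positivity), ?_⟩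
  intro y hy hy0
  set W : ℝ → ℝ := fun t => Vq lam mu (y t) with hWdef
  -- chain rule
  have hW' : ∀ t ∈ Set.Ici (0:ℝ), HasDerivWithinAt W (Vd lam mu (y t)) (Set.Ici 0) t := by
    intro t ht
    have h := hy t ht
    have hz : HasDerivWithinAt (fun s => (y s).1)
        (-((mu / 2) * (y t).1 * |(y t).1| + lam * (y t).1 + 2 * (y t).2)) (Set.Ici 0) t := h.fst
    have hm : HasDerivWithinAt (fun s => (y s).2)
        (mu * (y t).2 * |(y t).1| + mu * (y t).1) (Set.Ici 0) t := by
      have h2 : HasDerivWithinAt (fun s => (y s).2) ((-(F (y t))).2) (Set.Ici 0) t := h.snd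
      have heq : (-(F (y t))).2 = mu * (y t).2 * |(y t).1| + mu * (y t).1 := by
        show -(-(mu * (y t).2 * |(y t).1|) - mu * (y t).1) = _
        ring
      rwa [heq] at h2
    have hd := (((hz.pow 2).const_mul mu).add ((hz.mul hm).const_mul lam)).add
      ((hm.pow 2).const_mul (2 + lam ^ 2 / (2 * mu)))
    show HasDerivWithinAt (fun t => Vq lam mu (y t)) (Vd lam mu (y t)) (Set.Ici 0) t
    simp only [Vq]
    convert hd using 1
    · rfl
    · rfl
    · rfl
    simp only [Vd]
    ring
  have hcont : ∀ T : ℝ, ContinuousOn W (Set.Icc 0 T) := fun T s hs =>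
    ((hW' s hs.1).continuousWithinAt).mono Set.Icc_subset_Ici_self
  have hderiv : ∀ T : ℝ, ∀ x ∈ Set.Ico (0:ℝ) T,
      HasDerivWithinAt W (Vd lam mu (y x)) (Set.Ici x) x := fun T x hx =>
    (hW' x hx.1).mono (Set.Ici_subset_Ici.mpr hx.1)
  -- initial bound
  have hW0 : W 0 < c₀ := by
    have h1 : W 0 ≤ β * ((y 0).1 ^ 2 + (y 0).2 ^ 2) := Vq_le lam mu hlam hmu (y 0)
    have hf1 : |(y 0).1| ≤ ‖y 0‖ := by rw [← Real.norm_eq_abs]; exact norm_fst_le (y 0)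
    have hf2 : |(y 0).2| ≤ ‖y 0‖ := by rw [← Real.norm_eq_abs]; exact norm_snd_le (y 0)
    have h3 : ‖y 0‖ ^ 2 < c₀ / (2 * β) := by
      have := (Real.lt_sqrt (norm_nonneg (y 0))).mp hy0
      linarith
    have h4 : (y 0).1 ^ 2 ≤ ‖y 0‖ ^ 2 := by nlinarith [abs_nonneg (y 0).1, sq_abs (y 0).1]
    have h5 : (y 0).2 ^ 2 ≤ ‖y 0‖ ^ 2 := by nlinarith [abs_nonneg (y 0).2, sq_abs (y 0).2]
    have h6 : β * ((y 0).1 ^ 2 + (y 0).2 ^ 2) ≤ β * (2 * (‖y 0‖ ^ 2)) := by nlinarith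
    have h7 : β * (2 * (‖y 0‖ ^ 2)) < β * (2 * (c₀ / (2 * β))) := by
      apply mul_lt_mul_of_pos_left _ hβ
      linarith
    have h8 : β * (2 * (c₀ / (2 * β))) = c₀ := by field_simp
    calc W 0 ≤ β * ((y 0).1 ^ 2 + (y 0).2 ^ 2) := h1
      _ ≤ β * (2 * ‖y 0‖ ^ 2) := h6
      _ < β * (2 * (c₀ / (2 * β))) := h7
      _ = c₀ := h8
  -- from V small to |z| small
  have hsmall : ∀ p : ℝ × ℝ, Vq lam mu p ≤ c₀ → |p.1| ≤ ε := by
    intro p hp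
    have h1 := le_Vq lam mu hlam hmu p
    have hS : p.1 ^ 2 + p.2 ^ 2 ≤ ε ^ 2 := by
      have : α * (p.1 ^ 2 + p.2 ^ 2) ≤ α * ε ^ 2 := by rw [← hc₀def]; linarith
      exact le_of_mul_le_mul_left this hα
    exact abs_le_of_sq_le _ _ hε.le (by linarith [sq_nonneg p.2])
  -- invariance
  have hinv : ∀ t ≥ (0:ℝ), W t ≤ c₀ := by
    intro T hT
    have hbd : ∀ x ∈ Set.Ico (0:ℝ) T, W x = c₀ → Vd lam mu (y x) < 0 := by
      intro x hx hWx
      have h1 : |(y x).1| ≤ ε := hsmall (y x) (le_of_eq hWx)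
      have h2 := Vd_key lam mu hlam hmu (y x) h1
      have hS : 0 < (y x).1 ^ 2 + (y x).2 ^ 2 := by
        by_contra h
        push_neg at h
        have h3 : W x ≤ β * ((y x).1 ^ 2 + (y x).2 ^ 2) := Vq_le lam mu hlam hmu (y x)
        nlinarith
      nlinarith
    exact image_le_of_deriv_right_lt_deriv_boundary (B := fun _ => c₀) (B' := fun _ => 0)
      (hcont T) (hderiv T) hW0.le (fun x => hasDerivAt_const x c₀) hbd ⟨hT, le_rfl⟩
  -- Gronwall decay
  have hdecay : ∀ t ≥ (0:ℝ), W t ≤ W 0 * Real.exp (-k * t) := by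
    intro t ht
    have hbd : ∀ x ∈ Set.Ico (0:ℝ) t, Vd lam mu (y x) ≤ -k * W x + 0 := by
      intro x hx
      have h1 : |(y x).1| ≤ ε := hsmall (y x) (hinv x hx.1)
      have h2 := Vd_key lam mu hlam hmu (y x) h1
      rw [← hκdef] at h2
      have h3 : W x ≤ β * ((y x).1 ^ 2 + (y x).2 ^ 2) := Vq_le lam mu hlam hmu (y x)
      have h4 : k * W x ≤ (κ / 2) * ((y x).1 ^ 2 + (y x).2 ^ 2) := by
        calc k * W x ≤ k * (β * ((y x).1 ^ 2 + (y x).2 ^ 2)) :=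
              mul_le_mul_of_nonneg_left h3 hk.le
          _ = (κ / 2) * ((y x).1 ^ 2 + (y x).2 ^ 2) := by
              rw [hkdef]; field_simp
      linarith
    have := le_gronwallBound_of_liminf_deriv_right_le (f := W)
      (f' := fun x => Vd lam mu (y x)) (δ := W 0) (K := -k) (ε := 0) (a := 0) (b := t)
      (hcont t)
      (fun x hx r hr => (hderiv t x hx).liminf_right_slope_le hr)
      le_rfl hbd t ⟨ht, le_rfl⟩
    rw [gronwallBound_ε0] at this
    simpa using this
  -- convergence
  have hW0nn : 0 ≤ W 0 := by
    have h1 := le_Vq lam mu hlam hmu (y 0)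
    nlinarith [sq_nonneg (y 0).1, sq_nonneg (y 0).2]
  have hSle : ∀ t ≥ (0:ℝ), (y t).1 ^ 2 + (y t).2 ^ 2 ≤ (W 0 / α) * Real.exp (-k * t) := by
    intro t ht
    have h1 := le_Vq lam mu hlam hmu (y t)
    have h2 := hdecay t ht
    rw [div_mul_eq_mul_div, le_div_iff₀ hα, mul_comm]
    linarith
  have hexp : Filter.Tendsto (fun t => (W 0 / α) * Real.exp (-k * t)) Filter.atTop (nhds 0) := by
    have h1 : Filter.Tendsto (fun t : ℝ => k * t) Filter.atTop Filter.atTop :=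
      Filter.Tendsto.const_mul_atTop hk Filter.tendsto_id
    have h2 : Filter.Tendsto (fun t : ℝ => -(k * t)) Filter.atTop Filter.atBot :=
      tendsto_neg_atTop_atBot.comp h1
    have h3 : Filter.Tendsto (fun t : ℝ => Real.exp (-(k * t))) Filter.atTop (nhds 0) :=
      Real.tendsto_exp_atBot.comp h2
    have h4 := h3.const_mul (W 0 / α)
    simpa [neg_mul] using h4
  have hStend : Filter.Tendsto (fun t => (y t).1 ^ 2 + (y t).2 ^ 2) Filter.atTop (nhds 0) := by
    apply squeeze_zero' (Filter.Eventually.of_forall fun t => by positivity) _ hexp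
    filter_upwards [Filter.eventually_ge_atTop (0:ℝ)] with t ht using hSle t ht
  have hsqrt : Filter.Tendsto (fun t => Real.sqrt ((y t).1 ^ 2 + (y t).2 ^ 2))
      Filter.atTop (nhds 0) := by
    have := (Real.continuous_sqrt.tendsto 0).comp hStend
    simpa [Function.comp_def] using this
  have hnorm : ∀ t, ‖y t‖ ≤ Real.sqrt ((y t).1 ^ 2 + (y t).2 ^ 2) := by
    intro t
    rw [Prod.norm_def]
    apply max_le
    · rw [Real.norm_eq_abs, ← Real.sqrt_sq_eq_abs]
      exact Real.sqrt_le_sqrt (by nlinarith [sq_nonneg (y t).2])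
    · rw [Real.norm_eq_abs, ← Real.sqrt_sq_eq_abs]
      exact Real.sqrt_le_sqrt (by nlinarith [sq_nonneg (y t).1])
  have hnt : Filter.Tendsto (fun t => ‖y t‖) Filter.atTop (nhds 0) :=
    squeeze_zero (fun t => norm_nonneg _) hnorm hsqrt
  have hfin : Filter.Tendsto y Filter.atTop (nhds (0 : ℝ × ℝ)) :=
    tendsto_zero_iff_norm_tendsto_zero.mpr hnt
  exact hfin
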